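/- For all n_p > 0 and n_e > 0, the quantum advantage ratio [(1 + n_e + √(n_e(1+n_e))) / (1 + n_e + √(n_p n_e (1+n_e)/(1+n_p)))]² is strictly greater than 1 and at most 4. -/
import Mathlib


/-- The quantum advantage ratio is strictly greater than 1 and at most 4. -/
theorem quantum_advantage_bounds (np ne : ℝ) (hnp : 0 < np) (hne : 0 < ne) :
    1 < ((1 + ne + Real.sqrt (ne * (1 + ne)))
          / (1 + ne + Real.sqrt (np * ne * (1 + ne) / (1 + np)))) ^ 2 ∧
    ((1 + ne + Real.sqrt (ne * (1 + ne)))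
          / (1 + ne + Real.sqrt (np * ne * (1 + ne) / (1 + np)))) ^ 2 ≤ 4 := by
  have h1e : (0:ℝ) < 1 + ne := by linarith
  have harg : (0:ℝ) < ne * (1 + ne) := by positivity
  have hs1 : 0 ≤ Real.sqrt (ne * (1 + ne)) := Real.sqrt_nonneg _
  have hs2 : 0 ≤ Real.sqrt (np * ne * (1 + ne) / (1 + np)) := Real.sqrt_nonneg _
  have hB : 0 < 1 + ne + Real.sqrt (np * ne * (1 + ne) / (1 + np)) := by linarith
  have hA : 0 < 1 + ne + Real.sqrt (ne * (1 + ne)) := by linarith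
  -- s2 < s1
  have hlt : Real.sqrt (np * ne * (1 + ne) / (1 + np)) < Real.sqrt (ne * (1 + ne)) := by
    apply Real.sqrt_lt_sqrt (by positivity)
    rw [div_lt_iff₀ (by linarith)]
    nlinarith
  -- s1 < 1 + ne
  have hs1lt : Real.sqrt (ne * (1 + ne)) < 1 + ne := by
    rw [Real.sqrt_lt' h1e]
    nlinarith
  have hdiv : 1 < (1 + ne + Real.sqrt (ne * (1 + ne)))
      / (1 + ne + Real.sqrt (np * ne * (1 + ne) / (1 + np))) := by
    rw [lt_div_iff₀ hB]; linarith
  have hdiv2 : (1 + ne + Real.sqrt (ne * (1 + ne)))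
      / (1 + ne + Real.sqrt (np * ne * (1 + ne) / (1 + np))) ≤ 2 := by
    rw [div_le_iff₀ hB]; linarith
  constructor
  · calc (1:ℝ) = 1 ^ 2 := by norm_num
    _ < _ := by
      apply pow_lt_pow_left₀ hdiv zero_le_one (by norm_num)
  · calc _ ≤ (2:ℝ) ^ 2 := pow_le_pow_left₀ (by positivity) hdiv2 2
    _ = 4 := by norm_num
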